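/- arXiv:1805.02178 — 3 statements merged into one kernel-verified Lean document; each statement's English description precedes it below -/
import Mathlib

section
/- In the metric space ℝⁿ with the Euclidean metric, the half-spaces Uᵢ = {x : x₁ ≥ i} with track points xᵢ = (i,0,…,0) do NOT form an infinite Φ-chain for any admissible function Φ; in fact, ℝⁿ (n ≥ 2, Euclidean) admits no infinite Φ-chain at all. -/
set_option maxHeartbeats 4000000

open Metric Filter

/-- Euclidean space `ℝⁿ` (`n ≥ 2`) admits no infinite Φ-chain: there is no admissible
function `Φ` together with nested open sets `U 0 ⊇ U 1 ⊇ ⋯` and track points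
`x 0, x 1, …` satisfying the Φ-chain conditions for all indices. -/
theorem no_infinite_phi_chain_in_euclidean
    (n : ℕ) (hn : 2 ≤ n) :
    ¬ ∃ (Φ : ℝ → ℝ) (U : ℕ → Set (EuclideanSpace ℝ (Fin n)))
        (x : ℕ → EuclideanSpace ℝ (Fin n)),
      MonotoneOn Φ (Set.Ici 0) ∧ 0 < Φ 0 ∧ Tendsto Φ atTop atTop ∧
      (∀ i, IsOpen (U i)) ∧
      (∀ i, U (i + 1) ⊆ U i) ∧
      (∀ i, Φ 0 ≤ dist (x i) (x (i + 1)) ∧ dist (x i) (x (i + 1)) ≤ 3 * Φ 0) ∧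
      (∀ i, x i ∈ frontier (U i)) ∧
      (∀ i, ∀ y ∈ frontier (U i),
        Φ (dist y (x i)) ≤ infDist y (frontier (U (i + 1)))) ∧
      (∀ i, 0 < i → ∀ y ∈ frontier (U i),
        Φ (dist y (x i)) ≤ infDist y (frontier (U (i - 1)))) := by
  classical
  rintro ⟨Φ, U, x, hmono, hΦ0, htend, hopen, hnest, hdist, hxf, hfwd, hbwd⟩
  have hU : Antitone U := antitone_nat_of_succ_le hnest
  have hΦle : ∀ d : ℝ, 0 ≤ d → Φ 0 ≤ Φ d := fun d hd => hmono (by simp) (by simpa using hd) hd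
  have hfr_open : ∀ i, frontier (U i) = closure (U i) \ U i := fun i => (hopen i).frontier_eq
  have hx0 : ∀ m, 1 ≤ m → x 0 ∉ U m := by
    intro m hm hmem
    have h1 : x 0 ∈ U 0 := hU (Nat.zero_le m) hmem
    have h0 : x 0 ∈ frontier (U 0) := hxf 0
    rw [hfr_open 0] at h0
    exact h0.2 h1
  have hxU : ∀ l m : ℕ, m < l → x l ∈ U m := by
    have key : ∀ j : ℕ, x (j+1) ∈ U j := by
      intro j
      have h1 : x (j+1) ∈ closure (U (j+1)) := by
        have h := hxf (j+1); rw [hfr_open] at h; exact h.1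
      have h2 : x (j+1) ∈ closure (U j) := closure_mono (hnest j) h1
      have h3 : x (j+1) ∉ frontier (U j) := by
        intro hfr
        have hb := hbwd (j+1) (Nat.succ_pos j) (x (j+1)) (hxf (j+1))
        simp only [Nat.add_sub_cancel] at hb
        rw [dist_self, infDist_zero_of_mem hfr] at hb
        linarith
      by_contra hmem
      exact h3 (by rw [hfr_open]; exact ⟨h2, hmem⟩)
    intro l m hml
    obtain ⟨j, rfl⟩ : ∃ j, l = j + 1 := ⟨l-1, by omega⟩
    exact hU (by omega : m ≤ j) (key j)
  -- the crossing/sum machinery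
  have chainSum : ∀ (γ : ℝ → EuclideanSpace ℝ (Fin n)) (L : NNReal) (a b : ℝ),
      a ≤ b → LipschitzWith L γ → ∀ (m₁ m₂ : ℕ), m₁ ≤ m₂ → γ a ∉ U m₁ → γ b ∈ U m₂ →
      ∃ T : ℕ → ℝ, (∀ m, m₁ ≤ m → m ≤ m₂ → T m ∈ Set.Icc a b ∧ γ (T m) ∈ frontier (U m)) ∧
        ∑ m ∈ Finset.Ico m₁ m₂, Φ (dist (γ (T m)) (x m)) ≤ (L:ℝ) * (b - a) := by
    intro γ L a b hab hLip m₁ m₂ hm12 hga hgb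
    set T : ℕ → ℝ := fun m => sSup {t | t ∈ Set.Icc a b ∧ γ t ∉ U m} with hT
    have hne : ∀ m, m₁ ≤ m → ({t | t ∈ Set.Icc a b ∧ γ t ∉ U m}).Nonempty :=
      fun m hm => ⟨a, ⟨le_rfl, hab⟩, fun h => hga (hU hm h)⟩
    have hbdd : ∀ m, BddAbove {t | t ∈ Set.Icc a b ∧ γ t ∉ U m} := fun m => ⟨b, fun t ht => ht.1.2⟩
    have hmem : ∀ m, m₁ ≤ m → m ≤ m₂ → T m ∈ Set.Icc a b ∧ γ (T m) ∈ frontier (U m) := by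
      intro m h1 h2
      have hne' := hne m h1
      have hbdd' := hbdd m
      have hTicc : T m ∈ Set.Icc a b :=
        ⟨le_csSup hbdd' ⟨⟨le_rfl, hab⟩, fun h => hga (hU h1 h)⟩,
         csSup_le hne' fun t ht => ht.1.2⟩
      have hnotin : γ (T m) ∉ U m := by
        have h3 : T m ∈ closure {t | t ∈ Set.Icc a b ∧ γ t ∉ U m} := csSup_mem_closure hne' hbdd'
        have h5 : γ '' {t | t ∈ Set.Icc a b ∧ γ t ∉ U m} ⊆ (U m)ᶜ := by
          rintro _ ⟨t, ht, rfl⟩; exact ht.2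
        have h4 : γ (T m) ∈ closure ((U m)ᶜ) :=
          closure_mono h5 (image_closure_subset_closure_image hLip.continuous
            (Set.mem_image_of_mem γ h3))
        rwa [((hopen m).isClosed_compl).closure_eq] at h4
      have hgbm : γ b ∈ U m := hU h2 hgb
      have hTb : T m < b := lt_of_le_of_ne hTicc.2 (fun h => hnotin (by rw [h]; exact hgbm))
      have hafter : ∀ t, T m < t → t ≤ b → γ t ∈ U m := by
        intro t h5 h6
        by_contra h7
        have : t ≤ T m := le_csSup hbdd' ⟨⟨le_trans hTicc.1 h5.le, h6⟩, h7⟩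
        linarith
      have hclos : γ (T m) ∈ closure (U m) := by
        have h5 : γ '' Set.Ioc (T m) b ⊆ U m := by
          rintro _ ⟨t, ht, rfl⟩; exact hafter t ht.1 ht.2
        have h6 : T m ∈ closure (Set.Ioc (T m) b) := by
          rw [closure_Ioc hTb.ne]; exact ⟨le_rfl, hTb.le⟩
        exact closure_mono h5 (image_closure_subset_closure_image hLip.continuous
          (Set.mem_image_of_mem γ h6))
      exact ⟨hTicc, by rw [hfr_open]; exact ⟨hclos, hnotin⟩⟩
    refine ⟨T, hmem, ?_⟩
    have hstep : ∀ m, m₁ ≤ m → m + 1 ≤ m₂ → Φ (dist (γ (T m)) (x m)) ≤ (L:ℝ) * (T (m+1) - T m) := by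
      intro m h1 h2
      have hz := hmem m h1 (by omega)
      have hz' := hmem (m+1) (by omega) h2
      have hTmono : T m ≤ T (m+1) := csSup_le_csSup (hbdd (m+1)) (hne m h1)
        (fun t ht => ⟨ht.1, fun h => ht.2 (hnest m h)⟩)
      calc Φ (dist (γ (T m)) (x m)) ≤ infDist (γ (T m)) (frontier (U (m+1))) := hfwd m _ hz.2
        _ ≤ dist (γ (T m)) (γ (T (m+1))) := infDist_le_dist_of_mem hz'.2
        _ ≤ (L:ℝ) * dist (T m) (T (m+1)) := hLip.dist_le_mul _ _
        _ = (L:ℝ) * (T (m+1) - T m) := by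
            rw [Real.dist_eq, abs_of_nonpos (by linarith)]; ring
    have tele0 : ∀ (f : ℕ → ℝ) (i j : ℕ), i ≤ j →
        ∑ m ∈ Finset.Ico i j, (f (m+1) - f m) = f j - f i := by
      intro f i j hij
      induction j, hij using Nat.le_induction with
      | base => simp
      | succ j h ih => rw [Finset.sum_Ico_succ_top h, ih]; ring
    have tele : ∑ m ∈ Finset.Ico m₁ m₂, ((L:ℝ) * (T (m+1) - T m)) = (L:ℝ) * (T m₂ - T m₁) := by
      rw [← Finset.mul_sum, tele0 T m₁ m₂ hm12]
    calc ∑ m ∈ Finset.Ico m₁ m₂, Φ (dist (γ (T m)) (x m))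
        ≤ ∑ m ∈ Finset.Ico m₁ m₂, ((L:ℝ) * (T (m+1) - T m)) := by
          apply Finset.sum_le_sum
          intro m hm; rw [Finset.mem_Ico] at hm; exact hstep m hm.1 (by omega)
      _ = (L:ℝ) * (T m₂ - T m₁) := tele
      _ ≤ (L:ℝ) * (b - a) := by
          apply mul_le_mul_of_nonneg_left _ L.coe_nonneg
          have h1 := (hmem m₁ le_rfl hm12).1
          have h2 := (hmem m₂ hm12 le_rfl).1
          linarith [h1.1, h2.2]
  -- chord lemma
  have chord : ∀ j : ℕ, ∀ z, z ∈ frontier (U (j+1)) → (j:ℝ) * Φ 0 ≤ dist z (x 0) := by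
    intro j
    induction j with
    | zero => intro z _; simpa using dist_nonneg
    | succ j ih =>
      intro z hz
      have hb := hbwd (j+1+1) (by omega) z hz
      simp only [Nat.add_sub_cancel] at hb
      have hb' : Φ 0 ≤ infDist z (frontier (U (j+1))) :=
        le_trans (hΦle _ dist_nonneg) hb
      have hzU : z ∈ U (j+1) := by
        have h1 : z ∈ closure (U (j+1)) := by
          rw [hfr_open] at hz
          exact closure_mono (hnest (j+1)) hz.1
        have h2 : z ∉ frontier (U (j+1)) := by
          intro hfr; rw [infDist_zero_of_mem hfr] at hb'; linarith
        by_contra hmem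
        exact h2 (by rw [hfr_open]; exact ⟨h1, hmem⟩)
      set c : EuclideanSpace ℝ (Fin n) := z - x 0 with hc
      set γ : ℝ → EuclideanSpace ℝ (Fin n) := fun t => x 0 + t • c with hγ
      have hLip : LipschitzWith ‖c‖₊ γ := by
        apply LipschitzWith.of_dist_le_mul
        intro s t
        have : γ s - γ t = (s - t) • c := by rw [hγ]; simp; module
        rw [dist_eq_norm, this, norm_smul, Real.dist_eq, coe_nnnorm]
        rw [Real.norm_eq_abs, mul_comm]
      have hg0 : γ 0 = x 0 := by rw [hγ]; simp
      have hg1 : γ 1 = z := by rw [hγ, hc]; simp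
      obtain ⟨T, hmem, -⟩ := chainSum γ ‖c‖₊ 0 1 zero_le_one hLip (j+1) (j+1) le_rfl
        (by rw [hg0]; exact hx0 (j+1) (by omega)) (by rw [hg1]; exact hzU)
      obtain ⟨hTicc, hTfr⟩ := hmem (j+1) le_rfl le_rfl
      set τ := T (j+1)
      have hwx : dist (γ τ) (x 0) = τ * ‖c‖ := by
        rw [hγ]; simp [dist_eq_norm, norm_smul, abs_of_nonneg hTicc.1]
      have hzw : dist z (γ τ) = (1 - τ) * ‖c‖ := by
        have : z - γ τ = (1 - τ) • c := by rw [hγ, hc]; simp; module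
        rw [dist_eq_norm, this, norm_smul, Real.norm_eq_abs,
          abs_of_nonneg (by linarith [hTicc.2])]
      have hih := ih (γ τ) hTfr
      have hinf : Φ 0 ≤ dist z (γ τ) := le_trans hb' (infDist_le_dist_of_mem hTfr)
      have hdzx : dist z (x 0) = ‖c‖ := by rw [dist_eq_norm, hc]
      push_cast
      rw [hdzx]
      rw [hwx] at hih
      rw [hzw] at hinf
      nlinarith [norm_nonneg c, hTicc.1, hTicc.2]
  -- track point bounds
  have hxlow : ∀ j : ℕ, (j:ℝ) * Φ 0 ≤ dist (x 0) (x (j+1)) := by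
    intro j; rw [dist_comm]; exact chord j _ (hxf (j+1))
  have hxub : ∀ m : ℕ, dist (x 0) (x m) ≤ 3 * (m:ℝ) * Φ 0 := by
    intro m
    induction m with
    | zero => simp
    | succ m ih =>
      calc dist (x 0) (x (m+1)) ≤ dist (x 0) (x m) + dist (x m) (x (m+1)) := dist_triangle _ _ _
        _ ≤ 3 * (m:ℝ) * Φ 0 + 3 * Φ 0 := add_le_add ih (hdist m).2
        _ = 3 * ((m:ℕ)+1:ℝ) * Φ 0 := by ring
        _ = 3 * (((m+1:ℕ)):ℝ) * Φ 0 := by push_cast; ring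
  obtain ⟨r₀, hr₀⟩ := eventually_atTop.mp (htend.eventually_ge_atTop (1000 * Φ 0))
  set r₁ := max r₀ 0 with hr₁def
  have hr₁ : ∀ t : ℝ, r₁ ≤ t → 1000 * Φ 0 ≤ Φ t := fun t ht =>
    hr₀ t (le_trans (le_max_left _ _) ht)
  have hr₁0 : 0 ≤ r₁ := le_max_right _ _
  set m₀ : ℕ := ⌈r₁ / Φ 0⌉₊ + 1 with hm₀def
  have hm₀ : r₁ ≤ ((m₀:ℝ) - 1) * Φ 0 := by
    have h1 : r₁ / Φ 0 ≤ (⌈r₁ / Φ 0⌉₊ : ℝ) := Nat.le_ceil _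
    have h2 : ((m₀:ℝ) - 1) = (⌈r₁ / Φ 0⌉₊ : ℝ) := by rw [hm₀def]; push_cast; ring
    rw [h2]
    calc r₁ = (r₁ / Φ 0) * Φ 0 := by field_simp
      _ ≤ _ := mul_le_mul_of_nonneg_right h1 hΦ0.le
  set k : ℕ := 2*m₀ + 2 with hkdef
  have hk1 : 1 ≤ k := by omega
  have hk1' : (1:ℝ) ≤ (k:ℝ) := by exact_mod_cast hk1
  have hm₀k : r₁ ≤ (k:ℝ) * Φ 0 := by
    have : ((m₀:ℝ) - 1) ≤ (k:ℝ) := by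
      have : (m₀:ℝ) ≤ (k:ℝ) := by exact_mod_cast (by omega : m₀ ≤ k)
      linarith
    nlinarith [hΦ0.le]
  have hex : ∃ l : ℕ, 12*(k:ℝ)*Φ 0 ≤ dist (x 0) (x l) := by
    refine ⟨12*k+1, ?_⟩
    have h := hxlow (12*k)
    calc 12*(k:ℝ)*Φ 0 = ((12*k : ℕ):ℝ)*Φ 0 := by push_cast; ring
      _ ≤ _ := h
  set lstar := Nat.find hex with hls
  have hlstar : 12*(k:ℝ)*Φ 0 ≤ dist (x 0) (x lstar) := Nat.find_spec hex
  have hmin : ∀ l, l < lstar → dist (x 0) (x l) < 12*(k:ℝ)*Φ 0 := by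
    intro l hl
    have := Nat.find_min hex hl
    linarith [not_le.mp this]
  have hl2k : 2*k+1 ≤ lstar := by
    by_contra hcon
    push_neg at hcon
    have h1 : dist (x 0) (x lstar) ≤ 3*(lstar:ℝ)*Φ 0 := hxub lstar
    have h2 : (lstar:ℝ) ≤ 2*(k:ℝ) := by exact_mod_cast (by omega : lstar ≤ 2*k)
    nlinarith [hΦ0]
  set R' := dist (x 0) (x lstar) with hR'def
  have hR'pos : 0 < R' := lt_of_lt_of_le (by nlinarith [hΦ0]) hlstar
  have hR'ub : R' ≤ 12*(k:ℝ)*Φ 0 + 3*Φ 0 := by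
    have hlpos : 1 ≤ lstar := by omega
    have h1 := hmin (lstar-1) (by omega)
    have h2 : dist (x (lstar-1)) (x lstar) ≤ 3*Φ 0 := by
      have h := (hdist (lstar-1)).2
      rwa [show lstar-1+1 = lstar by omega] at h
    calc R' ≤ dist (x 0) (x (lstar-1)) + dist (x (lstar-1)) (x lstar) := dist_triangle _ _ _
      _ ≤ _ := by linarith
  clear_value r₁ m₀ k lstar R'
  by_cases hsub : sphere (x 0) R' ⊆ U k
  · -- Case 1 : two opposite rays from x 0
    have hi0 : 0 < n := by omega
    obtain ⟨v, hvnorm⟩ : ∃ v : EuclideanSpace ℝ (Fin n), ‖v‖ = 1 :=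
      ⟨EuclideanSpace.single (⟨0, hi0⟩ : Fin n) (1:ℝ), by
        rw [EuclideanSpace.norm_single]; norm_num⟩
    have hray : ∀ w : EuclideanSpace ℝ (Fin n), ‖w‖ = 1 → ∃ T : ℕ → ℝ,
        (∀ m, 1 ≤ m → m ≤ k → T m ∈ Set.Icc 0 R' ∧ (x 0 + T m • w) ∈ frontier (U m)) ∧
        ∑ m ∈ Finset.Ico 1 k, Φ (dist (x 0 + T m • w) (x m)) ≤ R' := by
      intro w hw
      set γ : ℝ → EuclideanSpace ℝ (Fin n) := fun t => x 0 + t • w with hγ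
      have hLip : LipschitzWith 1 γ := by
        apply LipschitzWith.of_dist_le_mul
        intro s t
        have h1 : γ s - γ t = (s - t) • w := by rw [hγ]; simp; module
        rw [dist_eq_norm, h1, norm_smul, Real.norm_eq_abs, hw, Real.dist_eq]
        simp
      have hga : γ 0 = x 0 := by rw [hγ]; simp
      have hgb : γ R' ∈ U k := by
        apply hsub
        rw [mem_sphere]
        rw [hγ]
        simp only []
        rw [show (x 0 + R' • w) = x 0 + R' • w from rfl]
        rw [dist_eq_norm, add_sub_cancel_left, norm_smul, Real.norm_eq_abs, hw,
          abs_of_nonneg hR'pos.le, mul_one]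
      obtain ⟨T, h1, h2⟩ := chainSum γ 1 0 R' hR'pos.le hLip 1 k hk1
        (by rw [hga]; exact hx0 1 le_rfl) hgb
      refine ⟨T, fun m hm hmk => h1 m hm hmk, by simpa using h2⟩
    obtain ⟨Tp, hTp, hTpsum⟩ := hray v hvnorm
    obtain ⟨Tm, hTm, hTmsum⟩ := hray (-v) (by rw [norm_neg]; exact hvnorm)
    have hptws : ∀ m ∈ Finset.Ico m₀ k,
        1000 * Φ 0 ≤ Φ (dist (x 0 + Tp m • v) (x m)) + Φ (dist (x 0 + Tm m • (-v)) (x m)) := by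
      intro m hm
      rw [Finset.mem_Ico] at hm
      have h1m : 1 ≤ m := by omega
      obtain ⟨hTpicc, hTpfr⟩ := hTp m h1m (by omega)
      obtain ⟨hTmicc, hTmfr⟩ := hTm m h1m (by omega)
      obtain ⟨j, rfl⟩ : ∃ j, m = j + 1 := ⟨m-1, by omega⟩
      have hcp : ((j:ℝ)) * Φ 0 ≤ dist (x 0 + Tp (j+1) • v) (x 0) := chord j _ hTpfr
      have hcm : ((j:ℝ)) * Φ 0 ≤ dist (x 0 + Tm (j+1) • (-v)) (x 0) := chord j _ hTmfr
      have hdp : dist (x 0 + Tp (j+1) • v) (x 0) = Tp (j+1) := by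
        rw [dist_eq_norm, add_sub_cancel_left, norm_smul, Real.norm_eq_abs, hvnorm,
          abs_of_nonneg hTpicc.1, mul_one]
      have hdm : dist (x 0 + Tm (j+1) • (-v)) (x 0) = Tm (j+1) := by
        rw [dist_eq_norm, add_sub_cancel_left, norm_smul, Real.norm_eq_abs, norm_neg, hvnorm,
          abs_of_nonneg hTmicc.1, mul_one]
      have hdiff : dist (x 0 + Tp (j+1) • v) (x 0 + Tm (j+1) • (-v)) = Tp (j+1) + Tm (j+1) := by
        have h3 : (x 0 + Tp (j+1) • v) - (x 0 + Tm (j+1) • (-v)) = (Tp (j+1) + Tm (j+1)) • v := by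
          module
        rw [dist_eq_norm, h3, norm_smul, Real.norm_eq_abs, hvnorm, mul_one,
          abs_of_nonneg (by linarith [hTpicc.1, hTmicc.1])]
      have htri : Tp (j+1) + Tm (j+1) ≤
          dist (x 0 + Tp (j+1) • v) (x (j+1)) + dist (x 0 + Tm (j+1) • (-v)) (x (j+1)) := by
        rw [← hdiff]
        calc dist (x 0 + Tp (j+1) • v) (x 0 + Tm (j+1) • (-v))
            ≤ dist (x 0 + Tp (j+1) • v) (x (j+1)) + dist (x (j+1)) (x 0 + Tm (j+1) • (-v)) :=
              dist_triangle _ _ _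
          _ = _ := by rw [dist_comm (x (j+1))]
      have hj : r₁ ≤ (j:ℝ) * Φ 0 := by
        have h4 : ((m₀:ℝ) - 1) ≤ (j:ℝ) := by
          have : (m₀:ℝ) ≤ ((j+1:ℕ):ℝ) := by exact_mod_cast hm.1
          push_cast at this ⊢; linarith
        nlinarith [hΦ0.le]
      rw [hdp] at hcp
      rw [hdm] at hcm
      rcases le_total (dist (x 0 + Tp (j+1) • v) (x (j+1))) (dist (x 0 + Tm (j+1) • (-v)) (x (j+1))) with hle | hle
      · have hfar : r₁ ≤ dist (x 0 + Tm (j+1) • (-v)) (x (j+1)) := by linarith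
        have h5 := hr₁ _ hfar
        have h6 := hΦle (dist (x 0 + Tp (j+1) • v) (x (j+1))) dist_nonneg
        linarith
      · have hfar : r₁ ≤ dist (x 0 + Tp (j+1) • v) (x (j+1)) := by linarith
        have h5 := hr₁ _ hfar
        have h6 := hΦle (dist (x 0 + Tm (j+1) • (-v)) (x (j+1))) dist_nonneg
        linarith
    have hcard : (Finset.Ico m₀ k).card = m₀ + 2 := by rw [Nat.card_Ico]; omega
    have hsum2 : ((m₀:ℝ) + 2) * (1000 * Φ 0) ≤ 2 * R' := by
      have h1 := Finset.card_nsmul_le_sum (Finset.Ico m₀ k) _ _ hptws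
      rw [hcard, nsmul_eq_mul] at h1
      have hsub1 : ∑ m ∈ Finset.Ico m₀ k, Φ (dist (x 0 + Tp m • v) (x m))
          ≤ ∑ m ∈ Finset.Ico 1 k, Φ (dist (x 0 + Tp m • v) (x m)) := by
        apply Finset.sum_le_sum_of_subset_of_nonneg (Finset.Ico_subset_Ico (by omega) le_rfl)
        intro i _ _
        exact le_trans hΦ0.le (hΦle _ dist_nonneg)
      have hsub2 : ∑ m ∈ Finset.Ico m₀ k, Φ (dist (x 0 + Tm m • (-v)) (x m))
          ≤ ∑ m ∈ Finset.Ico 1 k, Φ (dist (x 0 + Tm m • (-v)) (x m)) := by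
        apply Finset.sum_le_sum_of_subset_of_nonneg (Finset.Ico_subset_Ico (by omega) le_rfl)
        intro i _ _
        exact le_trans hΦ0.le (hΦle _ dist_nonneg)
      rw [Finset.sum_add_distrib] at h1
      have hc2 : ((m₀ + 2 : ℕ):ℝ) = (m₀:ℝ) + 2 := by push_cast; ring
      rw [hc2] at h1
      linarith
    have hkcast : (k:ℝ) = 2*(m₀:ℝ) + 2 := by rw [hkdef]; push_cast; ring
    nlinarith [hΦ0, mul_nonneg (show (0:ℝ) ≤ (m₀:ℝ) by positivity) hΦ0.le]
  · -- Case 2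
    obtain ⟨p, hpS, hpU⟩ := Set.not_subset.mp hsub
    have hq : dist (x lstar) (x 0) = R' := by rw [dist_comm]; exact hR'def.symm
    set a0 : EuclideanSpace ℝ (Fin n) := p - x 0 with ha0
    set b0 : EuclideanSpace ℝ (Fin n) := x lstar - x 0 with hb0
    have hna : ‖a0‖ = R' := by rw [ha0, ← dist_eq_norm]; exact mem_sphere.mp hpS
    have hnb : ‖b0‖ = R' := by rw [hb0, ← dist_eq_norm]; exact hq
    clear_value a0 b0
    obtain ⟨w, hwn, hwa, hwb⟩ : ∃ w : EuclideanSpace ℝ (Fin n), ‖w‖ = 1 ∧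
        0 ≤ (inner ℝ a0 w : ℝ) ∧ 0 ≤ (inner ℝ b0 w : ℝ) := by
      by_cases hab : a0 + b0 = 0
      · have hane : a0 ≠ 0 := by
          intro h
          rw [h, norm_zero] at hna
          linarith
        have hKbot : (ℝ ∙ a0)ᗮ ≠ ⊥ := by
          intro hbot
          have htop := (Submodule.orthogonal_eq_bot_iff).mp hbot
          have h1 : Module.finrank ℝ (EuclideanSpace ℝ (Fin n)) = 1 := by
            rw [← finrank_top, ← htop, finrank_span_singleton hane]
          rw [finrank_euclideanSpace_fin] at h1
          omega
        obtain ⟨w₀, hw₀K, hw₀ne⟩ := Submodule.exists_mem_ne_zero_of_ne_bot hKbot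
        have hinner0 : (inner ℝ a0 w₀ : ℝ) = 0 :=
          (Submodule.mem_orthogonal _ _).mp hw₀K a0 (Submodule.mem_span_singleton_self a0)
        have hbneg : b0 = -a0 := eq_neg_of_add_eq_zero_left (by rwa [add_comm] at hab)
        refine ⟨‖w₀‖⁻¹ • w₀, norm_smul_inv_norm hw₀ne, ?_, ?_⟩
        · rw [real_inner_smul_right, hinner0, mul_zero]
        · rw [hbneg, inner_neg_left, real_inner_smul_right, hinner0, mul_zero, neg_zero]
      · have h3 : (0:ℝ) ≤ ‖a0 + b0‖⁻¹ := by positivity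
        have h1 : (inner ℝ a0 a0 : ℝ) = ‖a0‖^2 := real_inner_self_eq_norm_sq a0
        have h1b : (inner ℝ b0 b0 : ℝ) = ‖b0‖^2 := real_inner_self_eq_norm_sq b0
        have h2 : |(inner ℝ a0 b0 : ℝ)| ≤ ‖a0‖ * ‖b0‖ := abs_real_inner_le_norm a0 b0
        rw [hna] at h1 h2
        rw [hnb] at h1b h2
        refine ⟨‖a0 + b0‖⁻¹ • (a0 + b0), norm_smul_inv_norm hab, ?_, ?_⟩
        · rw [real_inner_smul_right, inner_add_right, h1]
          apply mul_nonneg h3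
          nlinarith [neg_abs_le (inner ℝ a0 b0 : ℝ)]
        · rw [real_inner_smul_right, inner_add_right, h1b]
          apply mul_nonneg h3
          have hcomm : (inner ℝ b0 a0 : ℝ) = (inner ℝ a0 b0 : ℝ) := real_inner_comm _ _
          rw [hcomm]
          nlinarith [neg_abs_le (inner ℝ a0 b0 : ℝ)]
    have habs_min : ∀ s t : ℝ, |min s 1 - min t 1| ≤ |s - t| := by
      intro s t
      rcases le_total s 1 with h1 | h1 <;> rcases le_total t 1 with h2 | h2
      · rw [min_eq_left h1, min_eq_left h2]
      · rw [min_eq_left h1, min_eq_right h2,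
          abs_of_nonpos (by linarith), abs_of_nonpos (by linarith)]
        linarith
      · rw [min_eq_right h1, min_eq_left h2,
          abs_of_nonneg (by linarith), abs_of_nonneg (by linarith)]
        linarith
      · rw [min_eq_right h1, min_eq_right h2, sub_self, abs_zero]
        exact abs_nonneg _
    have habs_max : ∀ s t : ℝ, |max (s-1) 0 - max (t-1) 0| ≤ |s - t| := by
      intro s t
      rcases le_total (s-1) 0 with h1 | h1 <;> rcases le_total (t-1) 0 with h2 | h2
      · rw [max_eq_right h1, max_eq_right h2, sub_self, abs_zero]
        exact abs_nonneg _
      · rw [max_eq_right h1, max_eq_left h2, zero_sub, abs_neg,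
          abs_of_nonneg (by linarith), abs_of_nonpos (by linarith)]
        linarith
      · rw [max_eq_left h1, max_eq_right h2, sub_zero,
          abs_of_nonneg (by linarith), abs_of_nonneg (by linarith)]
        linarith
      · rw [max_eq_left h1, max_eq_left h2, show s - 1 - (t-1) = s - t by ring]
    have h3Rw : ‖(3*R') • w‖ = 3*R' := by
      rw [norm_smul, Real.norm_eq_abs, hwn, mul_one, abs_of_nonneg (by linarith)]
    have hnA : ‖(3*R') • w - a0‖ ≤ 4*R' := by
      calc ‖(3*R') • w - a0‖ ≤ ‖(3*R') • w‖ + ‖a0‖ := norm_sub_le _ _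
        _ = 4*R' := by rw [h3Rw, hna]; ring
    have hnB : ‖b0 - (3*R') • w‖ ≤ 4*R' := by
      calc ‖b0 - (3*R') • w‖ ≤ ‖b0‖ + ‖(3*R') • w‖ := norm_sub_le _ _
        _ = 4*R' := by rw [h3Rw, hnb]; ring
    set γ : ℝ → EuclideanSpace ℝ (Fin n) :=
      fun t => p + (min t 1) • ((3*R') • w - a0) + (max (t-1) 0) • (b0 - (3*R') • w) with hγ
    clear_value γ
    have hLip : LipschitzWith (Real.toNNReal (8*R')) γ := by
      apply LipschitzWith.of_dist_le_mul
      intro s t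
      have hdf : γ s - γ t = (min s 1 - min t 1) • ((3*R') • w - a0)
          + (max (s-1) 0 - max (t-1) 0) • (b0 - (3*R') • w) := by
        simp only [hγ]
        module
      rw [dist_eq_norm, hdf]
      calc ‖(min s 1 - min t 1) • ((3*R') • w - a0)
            + (max (s-1) 0 - max (t-1) 0) • (b0 - (3*R') • w)‖
          ≤ ‖(min s 1 - min t 1) • ((3*R') • w - a0)‖
            + ‖(max (s-1) 0 - max (t-1) 0) • (b0 - (3*R') • w)‖ := norm_add_le _ _
        _ = |min s 1 - min t 1| * ‖(3*R') • w - a0‖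
            + |max (s-1) 0 - max (t-1) 0| * ‖b0 - (3*R') • w‖ := by
            rw [norm_smul, norm_smul, Real.norm_eq_abs, Real.norm_eq_abs]
        _ ≤ |s - t| * (4*R') + |s - t| * (4*R') := by
            apply add_le_add
            · exact mul_le_mul (habs_min s t) hnA (norm_nonneg _) (abs_nonneg _)
            · exact mul_le_mul (habs_max s t) hnB (norm_nonneg _) (abs_nonneg _)
        _ = (8*R') * |s - t| := by ring
        _ = (Real.toNNReal (8*R') : ℝ) * dist s t := by
            rw [Real.coe_toNNReal _ (by linarith), Real.dist_eq]
    have hg0 : γ 0 = p := by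
      simp only [hγ]
      norm_num
    have hg2 : γ 2 = x lstar := by
      simp only [hγ]
      rw [show min (2:ℝ) 1 = 1 by norm_num, show max ((2:ℝ)-1) 0 = 1 by norm_num,
        one_smul, one_smul, ha0, hb0]
      module
    obtain ⟨T, hT, hTsum⟩ := chainSum γ (Real.toNNReal (8*R')) 0 2 (by norm_num) hLip k (2*k)
      (by omega) (by rw [hg0]; exact hpU) (by rw [hg2]; exact hxU lstar (2*k) (by omega))
    rw [Real.coe_toNNReal _ (by linarith)] at hTsum
    have hptws : ∀ m ∈ Finset.Ico k (2*k), 1000 * Φ 0 ≤ Φ (dist (γ (T m)) (x m)) := by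
      intro m hm
      rw [Finset.mem_Ico] at hm
      obtain ⟨hTicc, hTfr⟩ := hT m hm.1 (by omega)
      have ht0 : 0 ≤ T m := hTicc.1
      have ht2 : T m ≤ 2 := hTicc.2
      have hlow : (9/10) * R' ≤ ‖γ (T m) - x 0‖ := by
        rcases le_total (T m) 1 with h1 | h1
        · have hform : γ (T m) - x 0 = (1 - T m) • a0 + (3*R'*(T m)) • w := by
            simp only [hγ]
            rw [min_eq_left h1, max_eq_right (by linarith : T m - 1 ≤ 0), zero_smul, add_zero, ha0]
            module
          rw [hform]
          have hexp := norm_add_sq_real ((1 - T m) • a0) ((3*R'*(T m)) • w)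
          rw [norm_smul, norm_smul, Real.norm_eq_abs, Real.norm_eq_abs, hna, hwn,
            abs_of_nonneg (by linarith : (0:ℝ) ≤ 1 - T m),
            abs_of_nonneg (by nlinarith : (0:ℝ) ≤ 3*R'*(T m)), mul_one] at hexp
          have hinner : (inner ℝ ((1 - T m) • a0) ((3*R'*(T m)) • w) : ℝ)
              = (1 - T m)*(3*R'*(T m))*(inner ℝ a0 w : ℝ) := by
            rw [real_inner_smul_left, real_inner_smul_right]; ring
          rw [hinner] at hexp
          have hsq : ((9/10)*R')^2 ≤ ‖(1 - T m) • a0 + (3*R'*(T m)) • w‖^2 := by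
            rw [hexp]
            nlinarith [mul_nonneg (mul_nonneg (by linarith : (0:ℝ) ≤ 1 - T m)
                (by nlinarith : (0:ℝ) ≤ 3*R'*(T m))) hwa,
              mul_nonneg (sq_nonneg (T m - 1/10)) (sq_nonneg R'), sq_nonneg R']
          nlinarith [norm_nonneg ((1 - T m) • a0 + (3*R'*(T m)) • w), hR'pos.le, hsq]
        · have hform : γ (T m) - x 0 = (3*R'*(2 - T m)) • w + (T m - 1) • b0 := by
            simp only [hγ]
            rw [min_eq_right h1, max_eq_left (by linarith : (0:ℝ) ≤ T m - 1), one_smul, ha0, hb0]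
            module
          rw [hform]
          have hexp := norm_add_sq_real ((3*R'*(2 - T m)) • w) ((T m - 1) • b0)
          rw [norm_smul, norm_smul, Real.norm_eq_abs, Real.norm_eq_abs, hnb, hwn,
            abs_of_nonneg (by nlinarith : (0:ℝ) ≤ 3*R'*(2 - T m)),
            abs_of_nonneg (by linarith : (0:ℝ) ≤ T m - 1), mul_one] at hexp
          have hinner : (inner ℝ ((3*R'*(2 - T m)) • w) ((T m - 1) • b0) : ℝ)
              = (3*R'*(2 - T m))*(T m - 1)*(inner ℝ b0 w : ℝ) := by
            rw [real_inner_smul_left, real_inner_smul_right, real_inner_comm w b0]; ring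
          rw [hinner] at hexp
          have hsq : ((9/10)*R')^2 ≤ ‖(3*R'*(2 - T m)) • w + (T m - 1) • b0‖^2 := by
            rw [hexp]
            nlinarith [mul_nonneg (mul_nonneg (by nlinarith : (0:ℝ) ≤ 3*R'*(2 - T m))
                (by linarith : (0:ℝ) ≤ T m - 1)) hwb,
              mul_nonneg (sq_nonneg (T m - 19/10)) (sq_nonneg R'), sq_nonneg R']
          nlinarith [norm_nonneg ((3*R'*(2 - T m)) • w + (T m - 1) • b0), hR'pos.le, hsq]
      have hfar : r₁ ≤ dist (γ (T m)) (x m) := by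
        have h5 : dist (γ (T m)) (x 0) = ‖γ (T m) - x 0‖ := dist_eq_norm _ _
        have h6 := hxub m
        have h7 : dist (γ (T m)) (x 0) ≤ dist (γ (T m)) (x m) + dist (x m) (x 0) :=
          dist_triangle _ _ _
        have h8 : dist (x m) (x 0) = dist (x 0) (x m) := dist_comm _ _
        have hm2 : (m:ℝ) ≤ 2*(k:ℝ) := by exact_mod_cast (by omega : m ≤ 2*k)
        nlinarith [hΦ0.le, hlstar, hlow, hm₀k, mul_nonneg (show (0:ℝ) ≤ (k:ℝ) by positivity) hΦ0.le]
      exact hr₁ _ hfar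
    have hcard2 : (Finset.Ico k (2*k)).card = k := by rw [Nat.card_Ico]; omega
    have h1 := Finset.card_nsmul_le_sum (Finset.Ico k (2*k)) _ _ hptws
    rw [hcard2, nsmul_eq_mul] at h1
    nlinarith [hΦ0, hR'ub, hTsum, mul_le_mul_of_nonneg_right hk1' hΦ0.le]
end

section
/- Let k ≥ 1, n ≥ 2. Consider the radial operator acting on f(r) by Lf = −α f''(r) + ((α − T)/r) f'(r) + b f(r) + c f(r), where α, T, b, c are functions of r with k⁻¹ ≤ α ≤ k, n k⁻¹ ≤ T ≤ n k, |b| ≤ k, |c| ≤ k. Then there exist r₀ > 0 and β > 0 depending only on k and n such that the function f(r) = sech(β r) satisfies Lf ≥ 0 for all 0 < r < r₀. -/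
lemma sinh_le_mul_cosh {x : ℝ} (hx : 0 ≤ x) : Real.sinh x ≤ x * Real.cosh x := by
  have h : ∀ y : ℝ, HasDerivAt (fun t => t * Real.cosh t - Real.sinh t) (y * Real.sinh y) y := by
    intro y
    have := ((hasDerivAt_id y).mul (Real.hasDerivAt_cosh y)).sub (Real.hasDerivAt_sinh y)
    refine this.congr_deriv ?_; simp only [id]; ring
  have mono : MonotoneOn (fun t => t * Real.cosh t - Real.sinh t) (Set.Ici 0) := by
    apply monotoneOn_of_deriv_nonneg (convex_Ici 0)
    · exact (by continuity : Continuous fun t : ℝ => t * Real.cosh t - Real.sinh t).continuousOn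
    · intro y hy
      exact ((h y).differentiableAt).differentiableWithinAt
    · intro y hy
      rw [interior_Ici] at hy
      rw [(h y).deriv]
      exact mul_nonneg hy.le (Real.sinh_nonneg_iff.mpr hy.le)
  have := mono Set.self_mem_Ici (show x ∈ Set.Ici 0 from hx) hx
  simpa using this

lemma sech_hasDerivAt (β r : ℝ) :
    HasDerivAt (fun s => (Real.cosh (β * s))⁻¹)
      (-(β * Real.sinh (β * r)) / (Real.cosh (β * r)) ^ 2) r := by
  have h1 : HasDerivAt (fun s : ℝ => β * s) β r := by
    simpa using (hasDerivAt_id r).const_mul β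
  have h2 : HasDerivAt (fun s : ℝ => Real.cosh (β * s)) (Real.sinh (β * r) * β) r :=
    (Real.hasDerivAt_cosh (β * r)).comp r h1
  have h3 := h2.inv (Real.cosh_pos (x := β * r)).ne'
  refine h3.congr_deriv ?_
  ring

lemma sech_deriv2 (β r : ℝ) :
    HasDerivAt (fun t => -(β * Real.sinh (β * t)) / (Real.cosh (β * t)) ^ 2)
      (β ^ 2 * (Real.sinh (β * r) ^ 2 - 1) / (Real.cosh (β * r)) ^ 3) r := by
  have h1 : HasDerivAt (fun s : ℝ => β * s) β r := by
    simpa using (hasDerivAt_id r).const_mul β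
  have hu : HasDerivAt (fun t : ℝ => -(β * Real.sinh (β * t)))
      (-(β * (Real.cosh (β * r) * β))) r := by
    exact (((Real.hasDerivAt_sinh (β * r)).comp r h1).const_mul β).neg
  have hv : HasDerivAt (fun t : ℝ => (Real.cosh (β * t)) ^ 2)
      (2 * Real.cosh (β * r) * (Real.sinh (β * r) * β)) r := by
    have := ((Real.hasDerivAt_cosh (β * r)).comp r h1).pow 2
    refine this.congr_deriv ?_; simp [Function.comp]
  have hd := hu.div hv (by positivity : (Real.cosh (β * r)) ^ 2 ≠ 0)
  refine hd.congr_deriv ?_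
  have hc2 : Real.cosh (β * r) ^ 2 = Real.sinh (β * r) ^ 2 + 1 := Real.cosh_sq (β * r)
  have hcne : Real.cosh (β * r) ≠ 0 := (Real.cosh_pos (x := β * r)).ne'
  field_simp
  linear_combination (-β ^ 2) * hc2


set_option maxHeartbeats 1000000 in
lemma sech_key (k r α T b c s ch : ℝ) (hk : 1 ≤ k) (hr : 0 < r)
    (hxlt : 4 * k * r < 1 / (4 * k))
    (hc2 : ch ^ 2 = s ^ 2 + 1) (hch1 : 1 ≤ ch)
    (hslow : 4 * k * r ≤ s) (hsup : s ≤ 4 * k * r * ch)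
    (hα1 : 1 / k ≤ α) (hα2 : α ≤ k) (hT1 : 2 / k ≤ T)
    (hb : -k ≤ b) (hc : -k ≤ c) :
    0 ≤ α * (4 * k) ^ 2 * (1 - s ^ 2) * r + 4 * k * (T - α) * (s * ch)
      + (b + c) * ch ^ 2 * r := by
  have hk0 : (0:ℝ) < k := lt_of_lt_of_le one_pos hk
  have hx0 : (0:ℝ) < 4 * k * r := by positivity
  have hch0 : (0:ℝ) < ch := lt_of_lt_of_le one_pos hch1
  have hs0 : 0 < s := lt_of_lt_of_le hx0 hslow
  have hx4 : 4 * k * r < 1 / 4 := by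
    have : 1 / (4 * k) ≤ 1 / 4 :=
      div_le_div_of_nonneg_left (by norm_num) (by norm_num) (by linarith)
    linarith
  have h2 : (4 * k * r) ^ 2 ≤ 1 / (16 * k ^ 2) := by
    have h := sq_le_sq' (by linarith : -(1 / (4 * k)) ≤ 4 * k * r) hxlt.le
    calc (4 * k * r) ^ 2 ≤ (1 / (4 * k)) ^ 2 := h
      _ = 1 / (16 * k ^ 2) := by field_simp; ring
  have hchU : ch ^ 2 ≤ 16 / 15 := by
    have h1 : s ^ 2 ≤ (4 * k * r) ^ 2 * ch ^ 2 := by nlinarith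
    have h2' : (4 * k * r) ^ 2 ≤ 1 / 16 := by nlinarith
    nlinarith
  have hs2 : s ^ 2 ≤ 1 / (15 * k ^ 2) := by
    have h1 : s ^ 2 ≤ (4 * k * r) ^ 2 * ch ^ 2 := by nlinarith
    calc s ^ 2 ≤ (4 * k * r) ^ 2 * ch ^ 2 := h1
      _ ≤ (1 / (16 * k ^ 2)) * (16 / 15) :=
          mul_le_mul h2 hchU (by positivity) (by positivity)
      _ = 1 / (15 * k ^ 2) := by field_simp
  have hα0 : 0 < α := lt_of_lt_of_le (by positivity) hα1
  -- term 1
  have h1 : 16 * k ^ 2 * α * r - 16 / 15 * k * r ≤ α * (4 * k) ^ 2 * (1 - s ^ 2) * r := by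
    have hαs : α * s ^ 2 ≤ 1 / (15 * k) := by
      calc α * s ^ 2 ≤ k * (1 / (15 * k ^ 2)) :=
            mul_le_mul hα2 hs2 (by positivity) (by positivity)
        _ = 1 / (15 * k) := by field_simp
    have h16 : 16 * k ^ 2 * (α * s ^ 2) ≤ 16 / 15 * k := by
      calc 16 * k ^ 2 * (α * s ^ 2) ≤ 16 * k ^ 2 * (1 / (15 * k)) :=
            mul_le_mul_of_nonneg_left hαs (by positivity)
        _ = 16 / 15 * k := by field_simp
    nlinarith
  -- middle term
  have hmid : 16 * k ^ 2 * r * (T - α) - 16 / 15 * k * r ≤ 4 * k * (T - α) * (s * ch) := by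
    have hsc_low : 4 * k * r ≤ s * ch :=
      le_trans hslow (le_mul_of_one_le_right hs0.le hch1)
    have herr : s * ch - 4 * k * r ≤ 4 * k * r * s ^ 2 := by
      have := mul_le_mul_of_nonneg_right hsup hch0.le
      nlinarith [hc2]
    rcases le_total α T with hcase | hcase
    · have hstep : 4 * k * (T - α) * (4 * k * r) ≤ 4 * k * (T - α) * (s * ch) :=
        mul_le_mul_of_nonneg_left hsc_low (by nlinarith)
      have : 16 * k ^ 2 * r * (T - α) = 4 * k * (T - α) * (4 * k * r) := by ring
      nlinarith
    · have hαT : α - T ≤ k := by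
        have hT0 : 0 < T := lt_of_lt_of_le (by positivity) hT1
        linarith
      have herr2 : (α - T) * (s * ch - 4 * k * r) ≤ k * (4 * k * r * s ^ 2) :=
        mul_le_mul hαT herr (by nlinarith) hk0.le
      have hx1 : 4 * k * r * s ^ 2 ≤ 4 * k * r * (1 / (15 * k ^ 2)) :=
        mul_le_mul_of_nonneg_left hs2 hx0.le
      have hfin : 4 * k * (k * (4 * k * r * (1 / (15 * k ^ 2)))) = 16 / 15 * k * r := by
        field_simp; ring
      nlinarith [mul_le_mul_of_nonneg_left (le_trans herr2 (mul_le_mul_of_nonneg_left hx1 hk0.le))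
        (by positivity : (0:ℝ) ≤ 4 * k)]
  -- term 3
  have h3 : -(32 / 15) * k * r ≤ (b + c) * ch ^ 2 * r := by
    rcases le_total 0 (b + c) with h | h
    · have : 0 ≤ (b + c) * ch ^ 2 * r := by positivity
      nlinarith
    · have h4 : (b + c) * (16 / 15) ≤ (b + c) * ch ^ 2 :=
        mul_le_mul_of_nonpos_left hchU h
      nlinarith [mul_le_mul_of_nonneg_right h4 hr.le,
        mul_le_mul_of_nonneg_right (show -(2 * k) ≤ b + c by linarith) hr.le]
  have hTr : 32 * k * r ≤ 16 * k ^ 2 * r * T := by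
    have heq : 16 * k ^ 2 * r * (2 / k) = 32 * k * r := by field_simp; ring
    nlinarith [mul_le_mul_of_nonneg_left hT1 (by positivity : (0:ℝ) ≤ 16 * k ^ 2 * r)]
  nlinarith [h1, hmid, h3, hTr]

set_option maxHeartbeats 1000000 in
/-- There exist `r₀ > 0` and `β > 0`, depending only on `k` and `n`, such that
`f(r) = sech(β r)` satisfies `L f ≥ 0` for `0 < r < r₀`, where
`L f = -α f'' + ((α - T)/r) f' + b f + c f` with coefficients satisfying
`k⁻¹ ≤ α ≤ k`, `n k⁻¹ ≤ T ≤ n k`, `|b| ≤ k`, `|c| ≤ k`. -/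
theorem sech_supersolution
    (k : ℝ) (n : ℕ) (hk : 1 ≤ k) (hn : 2 ≤ n) :
    ∃ r₀ > (0:ℝ), ∃ β > (0:ℝ),
      ∀ r α T b c : ℝ, 0 < r → r < r₀ →
        k⁻¹ ≤ α → α ≤ k → (n : ℝ) * k⁻¹ ≤ T → T ≤ (n : ℝ) * k →
        |b| ≤ k → |c| ≤ k →
        0 ≤ -α * deriv (deriv fun s => (Real.cosh (β * s))⁻¹) r
            + ((α - T) / r) * deriv (fun s => (Real.cosh (β * s))⁻¹) r
            + b * (Real.cosh (β * r))⁻¹ + c * (Real.cosh (β * r))⁻¹ := by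
  have hk0 : (0:ℝ) < k := lt_of_lt_of_le one_pos hk
  refine ⟨1 / (16 * k ^ 2), by positivity, 4 * k, by positivity, ?_⟩
  intro r α T b c hr hr0 hα1 hα2 hT1 hT2 hb hc
  have hd1fun : deriv (fun t : ℝ => (Real.cosh (4 * k * t))⁻¹)
      = fun t => -(4 * k * Real.sinh (4 * k * t)) / (Real.cosh (4 * k * t)) ^ 2 :=
    funext fun t => (sech_hasDerivAt (4 * k) t).deriv
  have hd2 : deriv (deriv fun t : ℝ => (Real.cosh (4 * k * t))⁻¹) r
      = (4 * k) ^ 2 * (Real.sinh (4 * k * r) ^ 2 - 1) / (Real.cosh (4 * k * r)) ^ 3 := by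
    rw [hd1fun]
    exact (sech_deriv2 (4 * k) r).deriv
  rw [hd2, hd1fun]
  set s : ℝ := Real.sinh (4 * k * r) with hs
  set ch : ℝ := Real.cosh (4 * k * r) with hchdef
  have hch1 : 1 ≤ ch := Real.one_le_cosh (4 * k * r)
  have hch0 : (0:ℝ) < ch := lt_of_lt_of_le one_pos hch1
  have hx0 : (0:ℝ) < 4 * k * r := by positivity
  have heq : -α * ((4 * k) ^ 2 * (s ^ 2 - 1) / ch ^ 3)
      + (α - T) / r * (-(4 * k * s) / ch ^ 2) + b * ch⁻¹ + c * ch⁻¹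
      = (α * (4 * k) ^ 2 * (1 - s ^ 2) * r + 4 * k * (T - α) * (s * ch)
          + (b + c) * ch ^ 2 * r) / (ch ^ 3 * r) := by
    field_simp
    ring
  rw [heq]
  apply div_nonneg _ (by positivity)
  apply sech_key k r α T b c s ch hk hr
  · calc 4 * k * r < 4 * k * (1 / (16 * k ^ 2)) :=
        mul_lt_mul_of_pos_left hr0 (by positivity)
      _ = 1 / (4 * k) := by field_simp; ring
  · exact Real.cosh_sq (4 * k * r)
  · exact hch1
  · exact Real.self_le_sinh_iff.mpr hx0.le
  · exact sinh_le_mul_cosh hx0.le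
  · rw [one_div]; exact hα1
  · exact hα2
  · have hn2 : (2:ℝ) ≤ (n:ℝ) := by exact_mod_cast hn
    calc 2 / k = 2 * k⁻¹ := by rw [div_eq_mul_inv]
      _ ≤ (n:ℝ) * k⁻¹ := by
          apply mul_le_mul_of_nonneg_right hn2 (by positivity)
      _ ≤ T := hT1
  · exact (abs_le.mp hb).1
  · exact (abs_le.mp hc).1
end

section
/- Every bounded convex domain D ⊂ ℝⁿ is c-uniform for some c ≥ 1 depending on the ratio of its diameter to its inradius. -/
open Metric
open scoped NNReal ENNReal

lemma abs_min_sub_min_le (x y c : ℝ) : |min x c - min y c| ≤ |x - y| := by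
  have := ((LipschitzWith.id (α := ℝ)).min_const c).dist_le_mul x y
  simpa [Real.dist_eq] using this

lemma abs_max_sub_max_le (x y c : ℝ) : |max x c - max y c| ≤ |x - y| := by
  have := ((LipschitzWith.id (α := ℝ)).max_const c).dist_le_mul x y
  simpa [Real.dist_eq] using this

lemma eVar_le_of_lip {E : Type*} [PseudoEMetricSpace E] {f : ℝ → E} {K : ℝ≥0} {a b : ℝ}
    (hab : a ≤ b) (h : LipschitzOnWith K f (Set.Icc a b)) :
    eVariationOn f (Set.Icc a b) ≤ ENNReal.ofReal (K * (b - a)) := by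
  have h1 : eVariationOn (id : ℝ → ℝ) (Set.Icc a b ∩ Set.Icc a b) ≤
      ENNReal.ofReal (b - a) :=
    (monotone_id.monotoneOn _).eVariationOn_le (Set.left_mem_Icc.2 hab)
      (Set.right_mem_Icc.2 hab)
  rw [Set.inter_self] at h1
  calc eVariationOn f (Set.Icc a b) = eVariationOn (f ∘ id) (Set.Icc a b) := rfl
    _ ≤ K * eVariationOn (id : ℝ → ℝ) (Set.Icc a b) :=
        h.comp_eVariationOn_le (Set.mapsTo_id _)
    _ ≤ K * ENNReal.ofReal (b - a) := by gcongr
    _ = ENNReal.ofReal (K * (b - a)) := by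
        rw [← ENNReal.ofReal_coe_nnreal, ← ENNReal.ofReal_mul K.coe_nonneg]

lemma ball_combo {E : Type*} [NormedAddCommGroup E] [NormedSpace ℝ E] {D : Set E}
    (hD : Convex ℝ D) {x₀ u : E} (hu : u ∈ D) {r lam : ℝ} (hball : ball x₀ r ⊆ D)
    (h0 : 0 ≤ lam) (h1 : lam ≤ 1) :
    ball ((1 - lam) • u + lam • x₀) (lam * r) ⊆ D := by
  rcases eq_or_lt_of_le h0 with rfl | hpos
  · simp
  · intro y hy
    set z := (1 - lam) • u + lam • x₀ with hz
    have hv : x₀ + lam⁻¹ • (y - z) ∈ ball x₀ r := by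
      rw [mem_ball, dist_eq_norm]
      have : x₀ + lam⁻¹ • (y - z) - x₀ = lam⁻¹ • (y - z) := by abel
      rw [this, norm_smul, norm_inv, Real.norm_eq_abs, abs_of_pos hpos]
      rw [mem_ball, dist_eq_norm] at hy
      rw [inv_mul_lt_iff₀ hpos]
      exact hy
    have hyeq : y = (1 - lam) • u + lam • (x₀ + lam⁻¹ • (y - z)) := by
      rw [smul_add, smul_smul, mul_inv_cancel₀ (ne_of_gt hpos), one_smul, hz]
      abel
    rw [hyeq]
    exact hD hu (hball hv) (by linarith) h0 (by ring)


/-- `D` is a `c`-uniform domain: any two points of `D` are joined by a rectifiable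
curve in `D` of length at most `c · d(p,q)` satisfying the twisted double cone
condition with constant `c`. -/
def IsUniformDomain {n : ℕ} (c : ℝ) (D : Set (EuclideanSpace ℝ (Fin n))) : Prop :=
  ∀ p ∈ D, ∀ q ∈ D, ∃ (a b : ℝ) (γ : ℝ → EuclideanSpace ℝ (Fin n)),
    a < b ∧ γ a = p ∧ γ b = q ∧
    (∀ t ∈ Set.Icc a b, γ t ∈ D) ∧
    ContinuousOn γ (Set.Icc a b) ∧
    eVariationOn γ (Set.Icc a b) ≤ ENNReal.ofReal (c * dist p q) ∧
    ∀ t ∈ Set.Icc a b,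
      min (eVariationOn γ (Set.Icc a t)) (eVariationOn γ (Set.Icc t b)) ≤
        ENNReal.ofReal (c * infDist (γ t) (frontier D))


set_option maxHeartbeats 4000000 in
/-- Every bounded convex domain is `c`-uniform for some `c ≥ 1` depending only on the
ratio of its diameter to its inradius. -/
theorem boundedConvex_isUniformDomain :
    ∃ C : ℝ → ℝ, ∀ (n : ℕ) (D : Set (EuclideanSpace ℝ (Fin n))),
      IsOpen D → Convex ℝ D → Bornology.IsBounded D → D.Nonempty →
      ∀ (x₀ : EuclideanSpace ℝ (Fin n)) (r : ℝ), 0 < r → ball x₀ r ⊆ D →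
        ∃ c : ℝ, 1 ≤ c ∧ c ≤ C (diam D / r) ∧ IsUniformDomain c D := by
  refine ⟨fun x => 4 * x + 4, ?_⟩
  intro n D hopen hconv hbd hne x₀ r hr hball
  set c : ℝ := 4 * (diam D / r) + 4 with hc
  have hratio : 0 ≤ diam D / r := div_nonneg diam_nonneg hr.le
  have hc4 : (4:ℝ) ≤ c := by rw [hc]; linarith
  have hc0 : (0:ℝ) ≤ c := by linarith
  refine ⟨c, by linarith, le_refl _, ?_⟩
  intro p hp q hq
  by_cases hpq : p = q
  · subst hpq
    have hconst : ∀ s : Set ℝ, eVariationOn (fun _ : ℝ => p) s = 0 := fun s =>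
      eVariationOn.constant_on (by rintro x ⟨a, -, rfl⟩ y ⟨b, -, rfl⟩; rfl)
    exact ⟨0, 1, fun _ => p, one_pos, rfl, rfl, fun t _ => hp, continuousOn_const,
      by rw [hconst]; positivity,
      fun t ht => by rw [hconst, hconst]; simp⟩
  · have hx₀ : x₀ ∈ D := hball (mem_ball_self hr)
    set d := dist p q with hd
    have hd0 : 0 < d := dist_pos.2 hpq
    have hdiam : d ≤ diam D := dist_le_diam_of_mem hbd hp hq
    have hdiam0 : 0 < diam D := lt_of_lt_of_le hd0 hdiam
    set s : ℝ := d / (2 * diam D) with hs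
    have hs0 : 0 < s := div_pos hd0 (by linarith)
    have hs_half : s ≤ 1 / 2 := by
      rw [hs, div_le_iff₀ (by linarith)]
      linarith
    set m := midpoint ℝ p q with hm
    have hmD : m ∈ D := by
      have h2 := hconv hp hq (by norm_num : (0:ℝ) ≤ 1/2) (by norm_num : (0:ℝ) ≤ 1/2)
        (by norm_num)
      have hmeq : m = (1/2 : ℝ) • p + (1/2 : ℝ) • q := by
        rw [hm, midpoint_eq_smul_add, invOf_eq_inv, smul_add]
        norm_num
      rw [hmeq]; exact h2
    set w := (1 - s) • m + s • x₀ with hw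
    set γ : ℝ → EuclideanSpace ℝ (Fin n) :=
      fun t => p + (min t 1) • (w - p) + (max t 1 - 1) • (q - w) with hγdef
    have hγ0 : γ 0 = p := by
      simp only [hγdef]
      rw [min_eq_left (by norm_num : (0:ℝ) ≤ 1), max_eq_right (by norm_num : (0:ℝ) ≤ 1)]
      simp
    have hγ2 : γ 2 = q := by
      simp only [hγdef]
      rw [min_eq_right (by norm_num : (1:ℝ) ≤ 2), max_eq_left (by norm_num : (1:ℝ) ≤ 2)]
      module
    -- structural decomposition
    have hkey : ∀ t ∈ Set.Icc (0:ℝ) 2, ∃ u ∈ D,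
        γ t = (1 - s * min t (2 - t)) • u + (s * min t (2 - t)) • x₀ := by
      intro t ht
      obtain ⟨ht0, ht2⟩ := ht
      rcases le_total t 1 with h1 | h1
      · have hmin2 : min t (2 - t) = t := min_eq_left (by linarith)
        have hpos1 : (0:ℝ) < 1 - s * t := by
          nlinarith [mul_nonneg (by linarith : (0:ℝ) ≤ 1/2 - s) ht0]
        have ha : 0 ≤ (1 - t) / (1 - s * t) := div_nonneg (by linarith) hpos1.le
        have hb : 0 ≤ t * (1 - s) / (1 - s * t) :=
          div_nonneg (by nlinarith) hpos1.le
        have hab : (1 - t) / (1 - s * t) + t * (1 - s) / (1 - s * t) = 1 := by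
          rw [← add_div, div_eq_one_iff_eq hpos1.ne']
          ring
        refine ⟨((1 - t) / (1 - s * t)) • p + ((t * (1 - s)) / (1 - s * t)) • m,
          hconv hp hmD ha hb hab, ?_⟩
        have hγt : γ t = p + t • (w - p) := by
          simp only [hγdef]
          rw [min_eq_left h1, max_eq_right h1, sub_self, zero_smul, add_zero]
        rw [hγt, hmin2, hw]
        have hne0 : (1:ℝ) - s * t ≠ 0 := ne_of_gt hpos1
        have hne0' : (1:ℝ) - t * s ≠ 0 := by rw [mul_comm]; exact hne0
        match_scalars <;> field_simp <;> ring
      · have hmin2 : min t (2 - t) = 2 - t := min_eq_right (by linarith)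
        have hpos1 : (0:ℝ) < 1 - s * (2 - t) := by
          nlinarith [mul_nonneg (by linarith : (0:ℝ) ≤ 1/2 - s) (by linarith : (0:ℝ) ≤ 2 - t)]
        have ha : 0 ≤ (2 - t) * (1 - s) / (1 - s * (2 - t)) :=
          div_nonneg (by nlinarith) hpos1.le
        have hb : 0 ≤ (t - 1) / (1 - s * (2 - t)) := div_nonneg (by linarith) hpos1.le
        have hab : (2 - t) * (1 - s) / (1 - s * (2 - t)) + (t - 1) / (1 - s * (2 - t)) = 1 := by
          rw [← add_div, div_eq_one_iff_eq hpos1.ne']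
          ring
        refine ⟨((2 - t) * (1 - s) / (1 - s * (2 - t))) • m +
            ((t - 1) / (1 - s * (2 - t))) • q,
          hconv hmD hq ha hb hab, ?_⟩
        have hγt : γ t = p + (w - p) + (t - 1) • (q - w) := by
          simp only [hγdef]
          rw [min_eq_right h1, max_eq_left h1, one_smul]
        rw [hγt, hmin2, hw]
        have hne0 : (1:ℝ) - s * (2 - t) ≠ 0 := ne_of_gt hpos1
        have hne0' : (1:ℝ) - (2 - t) * s ≠ 0 := by rw [mul_comm]; exact hne0
        match_scalars <;> field_simp <;> ring
    have hlam : ∀ t ∈ Set.Icc (0:ℝ) 2,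
        0 ≤ s * min t (2 - t) ∧ s * min t (2 - t) ≤ 1 := by
      intro t ht
      obtain ⟨ht0, ht2⟩ := ht
      have hmin0 : 0 ≤ min t (2 - t) := le_min ht0 (by linarith)
      have hmin1 : min t (2 - t) ≤ 1 := by
        rcases le_total t 1 with h | h
        · exact le_trans (min_le_left _ _) h
        · exact le_trans (min_le_right _ _) (by linarith)
      constructor
      · positivity
      · nlinarith
    have hmem : ∀ t ∈ Set.Icc (0:ℝ) 2, γ t ∈ D := by
      intro t ht
      obtain ⟨u, huD, hγt⟩ := hkey t ht
      obtain ⟨hl0, hl1⟩ := hlam t ht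
      rw [hγt]
      exact hconv huD hx₀ (by linarith) hl0 (by ring)
    -- frontier nonempty
    have hfr : (frontier D).Nonempty := by
      rw [nonempty_frontier_iff]
      refine ⟨hne, fun hU => ?_⟩
      obtain ⟨R, hR⟩ := hbd.subset_closedBall x₀
      have hqp : ‖q - p‖ ≠ 0 := by
        simp only [norm_ne_zero_iff, sub_ne_zero]
        exact Ne.symm hpq
      set y := x₀ + ((|R| + 1) * ‖q - p‖⁻¹) • (q - p) with hy
      have hyD : y ∈ closedBall x₀ R := hR (by rw [hU]; trivial)
      rw [mem_closedBall, dist_eq_norm, hy] at hyD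
      have : x₀ + ((|R| + 1) * ‖q - p‖⁻¹) • (q - p) - x₀ =
          ((|R| + 1) * ‖q - p‖⁻¹) • (q - p) := by abel
      rw [this, norm_smul, Real.norm_eq_abs] at hyD
      have habs : |(|R| + 1) * ‖q - p‖⁻¹| = (|R| + 1) * ‖q - p‖⁻¹ := by
        apply abs_of_pos
        positivity
      rw [habs, mul_assoc, inv_mul_cancel₀ hqp, mul_one] at hyD
      have := le_abs_self R
      linarith
    -- infDist lower bound
    have hinf : ∀ t ∈ Set.Icc (0:ℝ) 2,
        s * min t (2 - t) * r ≤ infDist (γ t) (frontier D) := by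
      intro t ht
      obtain ⟨u, huD, hγt⟩ := hkey t ht
      obtain ⟨hl0, hl1⟩ := hlam t ht
      have hb : ball (γ t) (s * min t (2 - t) * r) ⊆ D := by
        rw [hγt]; exact ball_combo hconv huD hball hl0 hl1
      by_contra hlt
      push_neg at hlt
      obtain ⟨y, hyfr, hdy⟩ := (infDist_lt_iff hfr).1 hlt
      have hyD : y ∈ D := hb (by rwa [mem_ball, dist_comm])
      rw [hopen.frontier_eq] at hyfr
      exact hyfr.2 hyD
    -- lipschitz
    have hwp : ‖w - p‖ ≤ d := by
      have h1 : w - p = (1 - s) • (m - p) + s • (x₀ - p) := by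
        rw [hw]; module
      have h2 : ‖m - p‖ = d / 2 := by
        rw [← dist_eq_norm, hm, dist_comm, dist_left_midpoint, hd]
        norm_num
        ring
      have h3 : ‖x₀ - p‖ ≤ diam D := by
        rw [← dist_eq_norm]; exact dist_le_diam_of_mem hbd hx₀ hp
      have hsd : s * diam D = d / 2 := by
        rw [hs]; field_simp
      calc ‖w - p‖ ≤ ‖(1 - s) • (m - p)‖ + ‖s • (x₀ - p)‖ := by rw [h1]; exact norm_add_le _ _
        _ = (1 - s) * ‖m - p‖ + s * ‖x₀ - p‖ := by
            rw [norm_smul, norm_smul, Real.norm_eq_abs, Real.norm_eq_abs,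
              abs_of_nonneg (by linarith), abs_of_nonneg hs0.le]
        _ ≤ (1 - s) * (d / 2) + s * diam D := by
            rw [h2]
            have : (0:ℝ) ≤ 1 - s := by linarith
            nlinarith
        _ ≤ d := by rw [hsd]; nlinarith
    have hqw : ‖q - w‖ ≤ d := by
      have h1 : q - w = (1 - s) • (q - m) + s • (q - x₀) := by
        rw [hw]; module
      have h2 : ‖q - m‖ = d / 2 := by
        rw [← dist_eq_norm, hm, dist_comm, dist_midpoint_right, hd]
        norm_num
        ring
      have h3 : ‖q - x₀‖ ≤ diam D := by
        rw [← dist_eq_norm]; exact dist_le_diam_of_mem hbd hq hx₀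
      have hsd : s * diam D = d / 2 := by
        rw [hs]; field_simp
      calc ‖q - w‖ ≤ ‖(1 - s) • (q - m)‖ + ‖s • (q - x₀)‖ := by rw [h1]; exact norm_add_le _ _
        _ = (1 - s) * ‖q - m‖ + s * ‖q - x₀‖ := by
            rw [norm_smul, norm_smul, Real.norm_eq_abs, Real.norm_eq_abs,
              abs_of_nonneg (by linarith), abs_of_nonneg hs0.le]
        _ ≤ (1 - s) * (d / 2) + s * diam D := by
            rw [h2]
            have : (0:ℝ) ≤ 1 - s := by linarith
            nlinarith
        _ ≤ d := by rw [hsd]; nlinarith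
    have hLip : LipschitzWith (2 * d).toNNReal γ := by
      apply LipschitzWith.of_dist_le_mul
      intro x y
      have hdiff : γ x - γ y = (min x 1 - min y 1) • (w - p) +
          (max x 1 - max y 1) • (q - w) := by
        simp only [hγdef]; module
      rw [dist_eq_norm, hdiff, Real.coe_toNNReal _ (by positivity), Real.dist_eq]
      calc ‖(min x 1 - min y 1) • (w - p) + (max x 1 - max y 1) • (q - w)‖
          ≤ ‖(min x 1 - min y 1) • (w - p)‖ + ‖(max x 1 - max y 1) • (q - w)‖ :=
            norm_add_le _ _
        _ = |min x 1 - min y 1| * ‖w - p‖ + |max x 1 - max y 1| * ‖q - w‖ := by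
            rw [norm_smul, norm_smul, Real.norm_eq_abs, Real.norm_eq_abs]
        _ ≤ |x - y| * d + |x - y| * d := by
            apply add_le_add
            · exact mul_le_mul (abs_min_sub_min_le x y 1) hwp (norm_nonneg _) (abs_nonneg _)
            · exact mul_le_mul (abs_max_sub_max_le x y 1) hqw (norm_nonneg _) (abs_nonneg _)
        _ = 2 * d * |x - y| := by ring
    have hEvar : ∀ a' b' : ℝ, a' ≤ b' →
        eVariationOn γ (Set.Icc a' b') ≤ ENNReal.ofReal (2 * d * (b' - a')) := by
      intro a' b' h
      have := eVar_le_of_lip h ((hLip.lipschitzOnWith (s := Set.Icc a' b')))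
      rwa [Real.coe_toNNReal _ (by positivity)] at this
    have hcsr : 2 * d ≤ c * (s * r) := by
      rw [hc, hs]
      have hr' : r ≠ 0 := ne_of_gt hr
      have hdm : diam D ≠ 0 := ne_of_gt hdiam0
      field_simp
      nlinarith [mul_pos (mul_pos hd0 hr) hr, mul_pos hd0 hr, mul_pos hdiam0 hr]
    refine ⟨0, 2, γ, by norm_num, hγ0, hγ2, hmem, hLip.continuous.continuousOn, ?_, ?_⟩
    · refine le_trans (hEvar 0 2 (by norm_num)) (ENNReal.ofReal_le_ofReal ?_)
      nlinarith [mul_nonneg (by linarith : (0:ℝ) ≤ c - 4) hd0.le]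
    · intro t ht
      obtain ⟨ht0, ht2⟩ := ht
      have hinft := hinf t ⟨ht0, ht2⟩
      rcases le_total t 1 with h1 | h1
      · refine le_trans (min_le_left _ _) ?_
        refine le_trans (hEvar 0 t ht0) (ENNReal.ofReal_le_ofReal ?_)
        rw [min_eq_left (by linarith)] at hinft
        have h2 : 2 * d * t ≤ c * (s * t * r) := by nlinarith
        have h3 : c * (s * t * r) ≤ c * infDist (γ t) (frontier D) :=
          mul_le_mul_of_nonneg_left hinft hc0
        linarith
      · refine le_trans (min_le_right _ _) ?_
        refine le_trans (hEvar t 2 ht2) (ENNReal.ofReal_le_ofReal ?_)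
        rw [min_eq_right (by linarith)] at hinft
        have h2 : 2 * d * (2 - t) ≤ c * (s * (2 - t) * r) := by nlinarith
        have h3 : c * (s * (2 - t) * r) ≤ c * infDist (γ t) (frontier D) :=
          mul_le_mul_of_nonneg_left hinft hc0
        linarith
end
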